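/- In bond percolation on Z^2 with parameter p, if p < p* (the critical probability for north-east oriented percolation on Z^2), then almost surely every open cluster of (Z^2)_p is barred, i.e., contains no infinite path using only two non-opposite directions (no infinite NE, NW, SE or SW path starting at any vertex). -/

import Mathlib

open SimpleGraph

/-- The square lattice `ℤ²`. -/
def Grid : SimpleGraph (ℤ × ℤ) where
  Adj u v := |u.1 - v.1| + |u.2 - v.2| = 1
  symm := by constructor; intro u v h; simpa [abs_sub_comm] using h
  loopless := by constructor; intro u h; simp at h

/-- The edge boundary of a subgraph `H` of `ℤ²`: edges of the lattice not in `H`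
but incident to a vertex of `H`. -/
def edgeBoundary (H : Grid.Subgraph) : Set (Sym2 (ℤ × ℤ)) :=
  {e | e ∈ Grid.edgeSet ∧ e ∉ H.edgeSet ∧ ∃ v ∈ H.verts, v ∈ e}
open MeasureTheory ProbabilityTheory

/-- The open subgraph of `ℤ²` determined by a percolation configuration
`ω : Sym2 (ℤ × ℤ) → Bool`. -/
def openGraph (ω : Sym2 (ℤ × ℤ) → Bool) : SimpleGraph (ℤ × ℤ) where
  Adj u v := Grid.Adj u v ∧ ω s(u, v) = true
  symm := by
    constructor
    intro u v h
    refine ⟨Grid.adj_symm h.1, ?_⟩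
    rw [Sym2.eq_swap]; exact h.2
  loopless := by constructor; intro u h; exact Grid.irrefl h.1

/-- There is an infinite north-east path in `H` starting at `w`. -/
def HasInfNEPath (H : SimpleGraph (ℤ × ℤ)) (w : ℤ × ℤ) : Prop :=
  ∃ q : ℕ → ℤ × ℤ, q 0 = w ∧ ∀ i, H.Adj (q i) (q (i + 1)) ∧
    (q (i + 1) - q i = (1, 0) ∨ q (i + 1) - q i = (0, 1))

/-- There is an infinite unbarred (two non-opposite directions) path in `H`
starting at `w`. -/
def HasInfUnbarredPath (H : SimpleGraph (ℤ × ℤ)) (w : ℤ × ℤ) : Prop :=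
  ∃ q : ℕ → ℤ × ℤ, q 0 = w ∧ (∃ a b : ℤ, (a = 1 ∨ a = -1) ∧ (b = 1 ∨ b = -1) ∧
    ∀ i, H.Adj (q i) (q (i + 1)) ∧
      (q (i + 1) - q i = (a, 0) ∨ q (i + 1) - q i = (0, b)))

/-- A configuration is barred when no vertex starts an infinite unbarred open
path. -/
def Barred (H : SimpleGraph (ℤ × ℤ)) : Prop :=
  ∀ w : ℤ × ℤ, ¬ HasInfUnbarredPath H w

/-- `X` is a family of i.i.d. Bernoulli(`p`) indicators of the edges of `ℤ²`
under the probability measure `μ`: bond percolation with parameter `p`. -/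
def IsBernoulliPerc (p : ℝ) {Ω : Type*} [MeasurableSpace Ω] (μ : Measure Ω)
    (X : Sym2 (ℤ × ℤ) → Ω → Bool) : Prop :=
  IsProbabilityMeasure μ ∧ (∀ e, Measurable (X e)) ∧
    iIndepFun X μ ∧
    ∀ e ∈ Grid.edgeSet, μ {ω | X e ω = true} = ENNReal.ofReal p

/-- The critical probability `p*` for north-east oriented percolation on `ℤ²`: the
infimum of parameters `p` for which the origin starts an infinite open north-east
path with positive probability. -/
noncomputable def pstar : ℝ :=
  sInf {p : ℝ | 0 ≤ p ∧ p ≤ 1 ∧ ∃ (Ω : Type) (_ : MeasurableSpace Ω)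
    (μ : Measure Ω) (X : Sym2 (ℤ × ℤ) → Ω → Bool), IsBernoulliPerc p μ X ∧
    0 < μ {ω | HasInfNEPath (openGraph (fun e => X e ω)) (0, 0)}}
/-- The signed affine map used to reflect and translate the lattice. -/
def psiMap (w : ℤ × ℤ) (a b : ℤ) : ℤ × ℤ → ℤ × ℤ :=
  fun v => (w.1 + a * v.1, w.2 + b * v.2)

/-- The inverse of `psiMap` when `a, b = ±1`. -/
def invMap (w : ℤ × ℤ) (a b : ℤ) : ℤ × ℤ → ℤ × ℤ :=
  fun v => (a * (v.1 - w.1), b * (v.2 - w.2))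

lemma psiMap_invMap (w : ℤ × ℤ) {a b : ℤ} (ha2 : a * a = 1) (hb2 : b * b = 1)
    (v : ℤ × ℤ) : psiMap w a b (invMap w a b v) = v := by
  simp only [psiMap, invMap]
  exact Prod.ext (by simp only; linear_combination (v.1 - w.1) * ha2)
    (by simp only; linear_combination (v.2 - w.2) * hb2)

lemma psiMap_injective (w : ℤ × ℤ) {a b : ℤ} (ha : a ≠ 0) (hb : b ≠ 0) :
    Function.Injective (psiMap w a b) := by
  intro u v huv
  have e1 : a * u.1 = a * v.1 := by
    have := congrArg Prod.fst huv; simp only [psiMap] at this; omega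
  have e2 : b * u.2 = b * v.2 := by
    have := congrArg Prod.snd huv; simp only [psiMap] at this; omega
  exact Prod.ext (mul_left_cancel₀ ha e1) (mul_left_cancel₀ hb e2)

lemma grid_adj_psiMap (w : ℤ × ℤ) {a b : ℤ} (ha : a = 1 ∨ a = -1) (hb : b = 1 ∨ b = -1)
    (u v : ℤ × ℤ) : Grid.Adj (psiMap w a b u) (psiMap w a b v) ↔ Grid.Adj u v := by
  show |(w.1 + a * u.1) - (w.1 + a * v.1)| + |(w.2 + b * u.2) - (w.2 + b * v.2)| = 1 ↔
    |u.1 - v.1| + |u.2 - v.2| = 1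
  have h1 : (w.1 + a * u.1) - (w.1 + a * v.1) = a * (u.1 - v.1) := by ring
  have h2 : (w.2 + b * u.2) - (w.2 + b * v.2) = b * (u.2 - v.2) := by ring
  rw [h1, h2, abs_mul, abs_mul]
  rcases ha with rfl | rfl <;> rcases hb with rfl | rfl <;> simp

/-- The key path correspondence between unbarred `(a,b)`-paths for `X` and
north-east paths for the transformed configuration. -/
lemma path_equiv {Ω : Type*} (X : Sym2 (ℤ × ℤ) → Ω → Bool) (ω : Ω) (w : ℤ × ℤ)
    {a b : ℤ} (ha : a = 1 ∨ a = -1) (hb : b = 1 ∨ b = -1) :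
    (∃ q : ℕ → ℤ × ℤ, q 0 = w ∧ ∀ i,
        (openGraph fun e => X e ω).Adj (q i) (q (i + 1)) ∧
        (q (i + 1) - q i = (a, 0) ∨ q (i + 1) - q i = (0, b))) ↔
      HasInfNEPath (openGraph fun e => X (Sym2.map (psiMap w a b) e) ω) (0, 0) := by
  have ha2 : a * a = 1 := by rcases ha with rfl | rfl <;> norm_num
  have hb2 : b * b = 1 := by rcases hb with rfl | rfl <;> norm_num
  constructor
  · rintro ⟨q, hq0, hq⟩
    refine ⟨fun i => invMap w a b (q i), by simp [hq0, invMap], fun i => ?_⟩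
    obtain ⟨⟨hadj, hopen⟩, hdiff⟩ := hq i
    refine ⟨⟨?_, ?_⟩, ?_⟩
    · exact (grid_adj_psiMap w ha hb _ _).1 (by
        simp only [psiMap_invMap w ha2 hb2]; exact hadj)
    · show X (Sym2.map (psiMap w a b) s(invMap w a b (q i), invMap w a b (q (i+1)))) ω = true
      rw [Sym2.map_pair_eq, psiMap_invMap w ha2 hb2, psiMap_invMap w ha2 hb2]
      exact hopen
    · rcases hdiff with h | h
      · left
        obtain ⟨d1, d2⟩ : (q (i+1)).1 - (q i).1 = a ∧ (q (i+1)).2 - (q i).2 = 0 :=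
          ⟨by rw [← Prod.fst_sub, h], by rw [← Prod.snd_sub, h]⟩
        refine Prod.ext ?_ ?_ <;> simp only [invMap, Prod.fst_sub, Prod.snd_sub] <;>
          rcases ha with rfl | rfl <;> rcases hb with rfl | rfl <;> omega
      · right
        obtain ⟨d1, d2⟩ : (q (i+1)).1 - (q i).1 = 0 ∧ (q (i+1)).2 - (q i).2 = b :=
          ⟨by rw [← Prod.fst_sub, h], by rw [← Prod.snd_sub, h]⟩
        refine Prod.ext ?_ ?_ <;> simp only [invMap, Prod.fst_sub, Prod.snd_sub] <;>
          rcases ha with rfl | rfl <;> rcases hb with rfl | rfl <;> omega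
  · rintro ⟨r, hr0, hr⟩
    refine ⟨fun i => psiMap w a b (r i), by simp [hr0, psiMap], fun i => ?_⟩
    obtain ⟨⟨hadj, hopen⟩, hdiff⟩ := hr i
    refine ⟨⟨(grid_adj_psiMap w ha hb _ _).2 hadj, ?_⟩, ?_⟩
    · show X s(psiMap w a b (r i), psiMap w a b (r (i+1))) ω = true
      rw [← Sym2.map_pair_eq]
      exact hopen
    · rcases hdiff with h | h
      · left
        obtain ⟨d1, d2⟩ : (r (i+1)).1 - (r i).1 = 1 ∧ (r (i+1)).2 - (r i).2 = 0 :=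
          ⟨by rw [← Prod.fst_sub, h], by rw [← Prod.snd_sub, h]⟩
        refine Prod.ext ?_ ?_ <;> simp only [psiMap, Prod.fst_sub, Prod.snd_sub] <;>
          rcases ha with rfl | rfl <;> rcases hb with rfl | rfl <;> omega
      · right
        obtain ⟨d1, d2⟩ : (r (i+1)).1 - (r i).1 = 0 ∧ (r (i+1)).2 - (r i).2 = 1 :=
          ⟨by rw [← Prod.fst_sub, h], by rw [← Prod.snd_sub, h]⟩
        refine Prod.ext ?_ ?_ <;> simp only [psiMap, Prod.fst_sub, Prod.snd_sub] <;>
          rcases ha with rfl | rfl <;> rcases hb with rfl | rfl <;> omega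

lemma edge_mem_map (w : ℤ × ℤ) {a b : ℤ} (ha : a = 1 ∨ a = -1) (hb : b = 1 ∨ b = -1)
    {e : Sym2 (ℤ × ℤ)} (he : e ∈ Grid.edgeSet) :
    Sym2.map (psiMap w a b) e ∈ Grid.edgeSet := by
  induction e using Sym2.ind with
  | _ u v =>
    rw [Sym2.map_pair_eq, SimpleGraph.mem_edgeSet] at *
    exact (grid_adj_psiMap w ha hb u v).2 he

lemma iIndepFun_precomp {ι ι' Ω : Type*} {mΩ : MeasurableSpace Ω} {μ : Measure Ω}
    {X : ι → Ω → Bool} (h : iIndepFun X μ)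
    (g : ι' → ι) (hg : Function.Injective g) :
    iIndepFun (fun i => X (g i)) μ := by
  classical
  rw [iIndepFun_iff_measure_inter_preimage_eq_mul] at h ⊢
  intro S sets hsets
  set sets' : ι → Set Bool := Function.extend g sets (fun _ => Set.univ) with hs'
  have key : ∀ j, sets' (g j) = sets j := fun j => hg.extend_apply _ _ _
  have h1 : (⋂ i ∈ S, X (g i) ⁻¹' sets i) = ⋂ i ∈ S.image g, X i ⁻¹' sets' i := by
    ext ω
    simp only [Set.mem_iInter, Finset.mem_image]
    constructor
    · rintro hω i ⟨j, hj, rfl⟩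
      rw [key]; exact hω j hj
    · intro hω j hj
      rw [← key j]; exact hω (g j) ⟨j, hj, rfl⟩
  have h2 := h (S.image g) (sets := sets') (fun i hi => by
    obtain ⟨j, hj, rfl⟩ := Finset.mem_image.1 hi
    rw [key]; exact hsets j hj)
  rw [h1, h2, Finset.prod_image (fun i _ j _ hij => hg hij)]
  exact Finset.prod_congr rfl (fun j _ => by rw [key])

lemma mem_pstar_set {p : ℝ} (hp0 : 0 ≤ p) (hp1 : p ≤ 1) {Ω : Type*} [MeasurableSpace Ω]
    {μ : Measure Ω} {Y : Sym2 (ℤ × ℤ) → Ω → Bool} (hY : IsBernoulliPerc p μ Y)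
    (hpos : 0 < μ {ω | HasInfNEPath (openGraph fun e => Y e ω) (0, 0)}) :
    p ∈ {p : ℝ | 0 ≤ p ∧ p ≤ 1 ∧ ∃ (Ω : Type) (_ : MeasurableSpace Ω)
      (μ : Measure Ω) (X : Sym2 (ℤ × ℤ) → Ω → Bool), IsBernoulliPerc p μ X ∧
      0 < μ {ω | HasInfNEPath (openGraph (fun e => X e ω)) (0, 0)}} := by
  obtain ⟨hprob, hmeas, hindep, hedge⟩ := hY
  set f : Ω → (Sym2 (ℤ × ℤ) → Bool) := fun ω e => Y e ω with hf
  have hfm : Measurable f := measurable_pi_lambda _ hmeas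
  refine ⟨hp0, hp1, Sym2 (ℤ × ℤ) → Bool, inferInstance, μ.map f,
    fun e ω₀ => ω₀ e, ⟨?_, ?_, ?_, ?_⟩, ?_⟩
  · exact Measure.isProbabilityMeasure_map hfm.aemeasurable
  · exact fun e => measurable_pi_apply e
  · rw [iIndepFun_iff_measure_inter_preimage_eq_mul]
    intro S sets hsets
    have hm : ∀ i ∈ S, MeasurableSet ((fun ω₀ : Sym2 (ℤ × ℤ) → Bool => ω₀ i) ⁻¹' sets i) :=
      fun i hi => measurable_pi_apply i (hsets i hi)
    rw [Measure.map_apply hfm (Finset.measurableSet_biInter S hm)]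
    have hpre : f ⁻¹' (⋂ i ∈ S, (fun ω₀ : Sym2 (ℤ × ℤ) → Bool => ω₀ i) ⁻¹' sets i) =
        ⋂ i ∈ S, Y i ⁻¹' sets i := by
      ext ω; simp only [Set.mem_preimage, Set.mem_iInter]; rfl
    rw [hpre, (iIndepFun_iff_measure_inter_preimage_eq_mul.1 hindep) S hsets]
    exact Finset.prod_congr rfl fun i hi => by
      rw [Measure.map_apply hfm (measurable_pi_apply i (hsets i hi))]; rfl
  · intro e he
    have hms : MeasurableSet {ω₀ : Sym2 (ℤ × ℤ) → Bool | ω₀ e = true} := by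
      have h0 : {ω₀ : Sym2 (ℤ × ℤ) → Bool | ω₀ e = true} =
          (fun ω₀ : Sym2 (ℤ × ℤ) → Bool => ω₀ e) ⁻¹' {true} := rfl
      rw [h0]
      exact measurable_pi_apply e (measurableSet_singleton true)
    rw [Measure.map_apply hfm hms]
    exact hedge e he
  · exact hpos.trans_le (Measure.le_map_apply hfm.aemeasurable _)

/-- Sign encoding of booleans. -/
def sg (s : Bool) : ℤ := if s then 1 else -1

lemma sg_cases (s : Bool) : sg s = 1 ∨ sg s = -1 := by cases s <;> simp [sg]

/-- If `p < p*`, then almost surely every open cluster of bond percolation on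
`ℤ²` with parameter `p` is barred. -/
theorem ae_barred_of_lt_pstar (p : ℝ) (hp0 : 0 ≤ p) (hp : p < pstar)
    {Ω : Type*} [MeasurableSpace Ω] (μ : Measure Ω)
    (X : Sym2 (ℤ × ℤ) → Ω → Bool) (hX : IsBernoulliPerc p μ X) :
    μ {ω | Barred (openGraph (fun e => X e ω))} = 1 := by
  classical
  haveI : IsProbabilityMeasure μ := hX.1
  have hp1 : p ≤ 1 := by
    have he : s(((0 : ℤ), (0 : ℤ)), ((1 : ℤ), (0 : ℤ))) ∈ Grid.edgeSet := by
      rw [SimpleGraph.mem_edgeSet]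
      show |(0 : ℤ) - 1| + |(0 : ℤ) - 0| = 1
      norm_num
    have hμe := hX.2.2.2 _ he
    have hle : ENNReal.ofReal p ≤ 1 := by rw [← hμe]; exact prob_le_one
    exact ENNReal.ofReal_le_one.1 hle
  set Ev : (ℤ × ℤ) × Bool × Bool → Set Ω := fun z =>
    {ω | ∃ q : ℕ → ℤ × ℤ, q 0 = z.1 ∧ ∀ i,
      (openGraph fun e => X e ω).Adj (q i) (q (i + 1)) ∧
      (q (i + 1) - q i = (sg z.2.1, 0) ∨ q (i + 1) - q i = (0, sg z.2.2))} with hEv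
  have hzero : ∀ z, μ (Ev z) = 0 := by
    intro z
    by_contra hne
    have hpos : 0 < μ (Ev z) := pos_iff_ne_zero.2 hne
    obtain ⟨w, s, t⟩ := z
    have ha := sg_cases s
    have hb := sg_cases t
    have ha0 : sg s ≠ 0 := by rcases ha with h | h <;> rw [h] <;> norm_num
    have hb0 : sg t ≠ 0 := by rcases hb with h | h <;> rw [h] <;> norm_num
    set Y : Sym2 (ℤ × ℤ) → Ω → Bool :=
      fun e => X (Sym2.map (psiMap w (sg s) (sg t)) e) with hYdef
    have hY : IsBernoulliPerc p μ Y :=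
      ⟨hX.1, fun e => hX.2.1 _,
        iIndepFun_precomp hX.2.2.1 _ (Sym2.map.injective (psiMap_injective w ha0 hb0)),
        fun e he => hX.2.2.2 _ (edge_mem_map w ha hb he)⟩
    have hEvEq : Ev (w, s, t) = {ω | HasInfNEPath (openGraph fun e => Y e ω) (0, 0)} :=
      Set.ext fun ω => path_equiv X ω w ha hb
    have hmem := mem_pstar_set hp0 hp1 hY (hEvEq ▸ hpos)
    have hle : pstar ≤ p := csInf_le ⟨0, fun x hx => hx.1⟩ hmem
    exact absurd hle (not_le.2 hp)
  have hsub : {ω | Barred (openGraph fun e => X e ω)}ᶜ ⊆ ⋃ z, Ev z := by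
    intro ω hω
    simp only [Set.mem_compl_iff, Set.mem_setOf_eq, Barred, not_forall, not_not] at hω
    obtain ⟨w, q, hq0, a, b, ha, hb, hq⟩ := hω
    refine Set.mem_iUnion.2 ⟨⟨w, decide (a = 1), decide (b = 1)⟩, q, hq0, ?_⟩
    have hsa : sg (decide (a = 1)) = a := by
      rcases ha with rfl | rfl <;> simp [sg]
    have hsb : sg (decide (b = 1)) = b := by
      rcases hb with rfl | rfl <;> simp [sg]
    rw [hsa, hsb]
    exact hq
  have hBadc : μ ({ω | Barred (openGraph fun e => X e ω)}ᶜ) = 0 :=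
    measure_mono_null hsub (measure_iUnion_null hzero)
  have h1 : (1 : ENNReal) ≤ μ {ω | Barred (openGraph fun e => X e ω)} := by
    have hle := measure_union_le (μ := μ) {ω | Barred (openGraph fun e => X e ω)}
      {ω | Barred (openGraph fun e => X e ω)}ᶜ
    rw [Set.union_compl_self, measure_univ, hBadc, add_zero] at hle
    exact hle
  exact le_antisymm prob_le_one h1
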